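/- Let m ≥ 2, and let N, r be non-negative integers, k ≥ 2 an integer, and γ a real number. Then the number of integers n with 0 ≤ n < N such that e(γ S_α(n+r)) · conj(e(γ S_α(n))) ≠ e(γ S_{α,k}(n+r)) · conj(e(γ S_{α,k}(n))) is at most N·r/q_{k−1}. -/

import Mathlib

noncomputable section

/-- `e x = exp(2 π i x)`. -/
def e (x : ℝ) : ℂ := Complex.exp (2 * Real.pi * Complex.I * x)

/-- Denominators of the convergents of `α = [0; 1, m, 1, m, …]`:
`q_0 = q_1 = 1`, `q_n = m·q_{n-1} + q_{n-2}` for even `n ≥ 2`, and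
`q_n = q_{n-1} + q_{n-2}` for odd `n ≥ 3`. -/
def qseq (m : ℕ) : ℕ → ℕ
  | 0 => 1
  | 1 => 1
  | n + 2 => (if n % 2 = 0 then m else 1) * qseq m (n + 1) + qseq m n

/-- `b` assigns to each natural number `n` its (unique) Ostrowski `α`-digit
sequence for `α = [0; 1, m, 1, m, …]`: `n = ∑ i, b n i · q_i`, `b n 0 = 0`,
even-indexed digits are `≤ 1`, odd-indexed digits are `≤ m`, and if a digit
(of positive index) attains its maximal allowed value then the previous digit
vanishes. -/
def IsOstrowskiDigits (m : ℕ) (b : ℕ → ℕ →₀ ℕ) : Prop :=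
  (∀ n : ℕ, ((b n).sum fun i c => c * qseq m i) = n) ∧
  (∀ n : ℕ, b n 0 = 0) ∧
  (∀ n i : ℕ, i % 2 = 0 → b n i ≤ 1) ∧
  (∀ n i : ℕ, i % 2 = 1 → b n i ≤ m) ∧
  (∀ n i : ℕ, 1 ≤ i → b n i = (if i % 2 = 0 then 1 else m) → b n (i - 1) = 0)

/-- Ostrowski sum of digits `S_α(n)`. -/
def Sα (b : ℕ → ℕ →₀ ℕ) (n : ℕ) : ℕ := (b n).sum fun _ c => c

/-- Truncated Ostrowski sum of digits `S_{α,k}(n) = ∑_{0 ≤ i ≤ k-1} b_i(n)`. -/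
def Sαk (b : ℕ → ℕ →₀ ℕ) (k n : ℕ) : ℕ := ∑ i ∈ Finset.range k, b n i

namespace TruncAux

open Finset

/-- admissibility of a digit string -/
def Adm (m : ℕ) (c : ℕ →₀ ℕ) : Prop :=
  c 0 = 0 ∧ (∀ i, i % 2 = 0 → c i ≤ 1) ∧ (∀ i, i % 2 = 1 → c i ≤ m) ∧
    ∀ i, 1 ≤ i → c i = (if i % 2 = 0 then 1 else m) → c (i - 1) = 0

/-- value of a digit string -/
def val (m : ℕ) (c : ℕ →₀ ℕ) : ℕ := c.sum fun i v => v * qseq m i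

lemma qseq_pos (m : ℕ) (hm : 2 ≤ m) : ∀ j, 0 < qseq m j := by
  intro j
  induction j using Nat.strong_induction_on with
  | _ j ih =>
    match j with
    | 0 => simp [qseq]
    | 1 => simp [qseq]
    | (l + 2) =>
      have h1 := ih (l+1) (by omega)
      have h0 := ih l (by omega)
      simp only [qseq]
      positivity

lemma qseq_mono (m : ℕ) (hm : 2 ≤ m) : Monotone (qseq m) := by
  have h : ∀ j, qseq m j ≤ qseq m (j + 1) := by
    intro j
    match j with
    | 0 => simp [qseq]
    | (l + 1) =>
      have h0 := qseq_pos m hm l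
      simp only [qseq]
      have : 1 ≤ (if l % 2 = 0 then m else 1) := by split <;> omega
      nlinarith
  exact monotone_nat_of_le_succ h

lemma digit_le {m : ℕ} {c : ℕ →₀ ℕ} (hc : Adm m c) (i : ℕ) :
    c i ≤ if i % 2 = 0 then 1 else m := by
  rcases Nat.even_or_odd i with h | h
  · have : i % 2 = 0 := Nat.even_iff.mp h
    simp [this, hc.2.1 i this]
  · have : i % 2 = 1 := Nat.odd_iff.mp h
    simp [this, hc.2.2.1 i this]

/-- the key size bound: an admissible string truncated below `j` has value `< q_j`. -/
lemma sum_lt (m : ℕ) (hm : 2 ≤ m) {c : ℕ →₀ ℕ} (hc : Adm m c) :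
    ∀ j, ∑ i ∈ range j, c i * qseq m i < qseq m j := by
  intro j
  induction j using Nat.strong_induction_on with
  | _ j ih =>
    match j with
    | 0 => simp [qseq]
    | 1 => simp [qseq, hc.1]
    | (l + 2) =>
      have ih1 := ih (l+1) (by omega)
      have ih0 := ih l (by omega)
      have hq2 : qseq m (l+2) = (if l % 2 = 0 then m else 1) * qseq m (l+1) + qseq m l := rfl
      have hmx : (if (l+1) % 2 = 0 then 1 else m) = (if l % 2 = 0 then m else 1) := by
        rcases Nat.even_or_odd l with h | h
        · have h0 : l % 2 = 0 := Nat.even_iff.mp h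
          have h1 : (l+1) % 2 = 1 := by omega
          simp [h0, h1]
        · have h0 : l % 2 = 1 := Nat.odd_iff.mp h
          have h1 : (l+1) % 2 = 0 := by omega
          simp [h0, h1]
      rw [Finset.sum_range_succ]
      have hMx1 : 1 ≤ (if l % 2 = 0 then m else 1) := by split <;> omega
      have hcle : c (l+1) ≤ (if l % 2 = 0 then m else 1) := hmx ▸ digit_le hc (l+1)
      by_cases hcm : c (l+1) = (if l % 2 = 0 then m else 1)
      · have h0 : c l = 0 := by
          have := hc.2.2.2 (l+1) (by omega) (by rw [hmx]; exact hcm)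
          simpa using this
        have hs : ∑ i ∈ range (l+1), c i * qseq m i = ∑ i ∈ range l, c i * qseq m i := by
          rw [Finset.sum_range_succ, h0]; simp
        rw [hs, hcm, hq2]
        omega
      · have hlt : c (l+1) < (if l % 2 = 0 then m else 1) := lt_of_le_of_ne hcle hcm
        have hstep : c (l+1) * qseq m (l+1) + qseq m (l+1) ≤ (if l % 2 = 0 then m else 1) * qseq m (l+1) := by
          have := Nat.mul_le_mul_right (qseq m (l+1)) (by omega : c (l+1) + 1 ≤ (if l % 2 = 0 then m else 1))
          rw [add_mul, one_mul] at this
          exact this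
        have hql := qseq_pos m hm l
        rw [hq2]
        linarith

/-- computing `val` by a truncated sum -/
lemma val_eq_range (m : ℕ) (c : ℕ →₀ ℕ) (K : ℕ) (h : ∀ i, K ≤ i → c i = 0) :
    val m c = ∑ i ∈ range K, c i * qseq m i := by
  apply Finsupp.sum_of_support_subset
  · intro i hi
    simp only [Finsupp.mem_support_iff] at hi
    simp only [Finset.mem_range]
    by_contra hK
    exact hi (h i (by omega))
  · simp

lemma sum_digits_eq_range (c : ℕ →₀ ℕ) (K : ℕ) (h : ∀ i, K ≤ i → c i = 0) :
    (c.sum fun _ v => v) = ∑ i ∈ range K, c i := by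
  apply Finsupp.sum_of_support_subset
  · intro i hi
    simp only [Finsupp.mem_support_iff] at hi
    simp only [Finset.mem_range]
    by_contra hK
    exact hi (h i (by omega))
  · simp

lemma digits_unique_range (m : ℕ) (hm : 2 ≤ m) :
    ∀ (K : ℕ) (c c' : ℕ →₀ ℕ), Adm m c → Adm m c' →
      (∑ i ∈ range K, c i * qseq m i) = (∑ i ∈ range K, c' i * qseq m i) →
      ∀ i < K, c i = c' i := by
  have key : ∀ (K : ℕ) (c c' : ℕ →₀ ℕ), Adm m c → Adm m c' →
      (∑ i ∈ range (K+1), c i * qseq m i) = (∑ i ∈ range (K+1), c' i * qseq m i) →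
      c K < c' K → False := by
    intro K c c' hc hc' hsum hlt
    have h1 := sum_lt m hm hc K
    rw [Finset.sum_range_succ, Finset.sum_range_succ] at hsum
    have hstep : c K * qseq m K + qseq m K ≤ c' K * qseq m K := by
      have := Nat.mul_le_mul_right (qseq m K) (by omega : c K + 1 ≤ c' K)
      rw [add_mul, one_mul] at this
      exact this
    have : (0:ℕ) ≤ ∑ i ∈ range K, c' i * qseq m i := Nat.zero_le _
    linarith
  intro K
  induction K with
  | zero => intro c c' _ _ _ i hi; omega
  | succ K IH =>
    intro c c' hc hc' hsum i hi
    have hK : c K = c' K := by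
      rcases lt_trichotomy (c K) (c' K) with h | h | h
      · exact absurd (key K c c' hc hc' hsum h) (by simp)
      · exact h
      · exact absurd (key K c' c hc' hc hsum.symm h) (by simp)
    rcases Nat.lt_or_ge i K with h | h
    · apply IH c c' hc hc' _ i h
      rw [Finset.sum_range_succ, Finset.sum_range_succ, hK] at hsum
      omega
    · have : i = K := by omega
      rw [this, hK]

lemma adm_val_injective (m : ℕ) (hm : 2 ≤ m) {c c' : ℕ →₀ ℕ}
    (hc : Adm m c) (hc' : Adm m c') (h : val m c = val m c') : c = c' := by
  set K := ((c.support ∪ c'.support).sup id) + 1 with hKdef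
  have hbound : ∀ (d : ℕ →₀ ℕ), d.support ⊆ c.support ∪ c'.support → ∀ i, K ≤ i → d i = 0 := by
    intro d hd i hi
    by_contra hne
    have hmem : i ∈ d.support := Finsupp.mem_support_iff.2 hne
    have := Finset.le_sup (f := id) (hd hmem)
    simp only [id] at this
    omega
  have h1 : ∀ i, K ≤ i → c i = 0 := hbound c Finset.subset_union_left
  have h2 : ∀ i, K ≤ i → c' i = 0 := hbound c' Finset.subset_union_right
  rw [val_eq_range m c K h1, val_eq_range m c' K h2] at h
  have := digits_unique_range m hm K c c' hc hc' h
  ext i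
  rcases Nat.lt_or_ge i K with hik | hik
  · exact this i hik
  · rw [h1 i hik, h2 i hik]


def lowk (m : ℕ) (b : ℕ → ℕ →₀ ℕ) (k n : ℕ) : ℕ := ∑ i ∈ Finset.range k, b n i * qseq m i

def gg (m : ℕ) (b : ℕ → ℕ →₀ ℕ) (k n : ℕ) : ℕ := n - lowk m b k n

section WithB

variable {m : ℕ} (hm : 2 ≤ m) {b : ℕ → ℕ →₀ ℕ} (hb : IsOstrowskiDigits m b) {k : ℕ} (hk : 2 ≤ k)

include hm hb

lemma adm_b (n : ℕ) : Adm m (b n) :=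
  ⟨hb.2.1 n, fun i h => hb.2.2.1 n i h, fun i h => hb.2.2.2.1 n i h,
    fun i h1 h2 => hb.2.2.2.2 n i h1 h2⟩

lemma val_b (n : ℕ) : val m (b n) = n := hb.1 n

lemma digits_vanish {n K : ℕ} (hn : n < qseq m K) : ∀ i, K ≤ i → b n i = 0 := by
  intro i hi
  by_contra hne
  have hmem : i ∈ (b n).support := Finsupp.mem_support_iff.2 hne
  have h1 : b n i * qseq m i ≤ val m (b n) := by
    unfold val Finsupp.sum
    exact Finset.single_le_sum (f := fun j => b n j * qseq m j) (fun j _ => Nat.zero_le _) hmem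
  rw [val_b hm hb] at h1
  have h2 : qseq m K ≤ qseq m i := qseq_mono m hm hi
  have h3 : qseq m i ≤ b n i * qseq m i := Nat.le_mul_of_pos_left _ (by omega)
  omega

lemma exists_bigK (k n : ℕ) : ∃ K, k ≤ K ∧ ∀ i, K ≤ i → b n i = 0 := by
  refine ⟨max k ((b n).support.sup id + 1), le_max_left _ _, ?_⟩
  intro i hi
  by_contra hne
  have hmem : i ∈ (b n).support := Finsupp.mem_support_iff.2 hne
  have := Finset.le_sup (f := id) hmem
  simp only [id] at this
  omega

lemma split_sum {K n : ℕ} (hkK : k ≤ K) (hv : ∀ i, K ≤ i → b n i = 0) :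
    lowk m b k n + ∑ i ∈ Finset.Ico k K, b n i * qseq m i = n := by
  have : lowk m b k n + ∑ i ∈ Finset.Ico k K, b n i * qseq m i
      = ∑ i ∈ Finset.range K, b n i * qseq m i := by
    unfold lowk
    rw [Finset.range_eq_Ico, Finset.range_eq_Ico]
    exact Finset.sum_Ico_consecutive _ (Nat.zero_le k) hkK
  rw [this, ← val_eq_range m (b n) K hv, val_b hm hb]

lemma lowk_le (n : ℕ) : lowk m b k n ≤ n := by
  obtain ⟨K, hkK, hv⟩ := exists_bigK hm hb k n
  have := split_sum hm hb hkK hv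
  omega

lemma gg_add_lowk (n : ℕ) : gg m b k n + lowk m b k n = n :=
  Nat.sub_add_cancel (lowk_le hm hb n)

lemma gg_ico {K n : ℕ} (hkK : k ≤ K) (hv : ∀ i, K ≤ i → b n i = 0) :
    ∑ i ∈ Finset.Ico k K, b n i * qseq m i = gg m b k n := by
  have h1 := split_sum hm hb (k := k) hkK hv
  have h2 := lowk_le hm hb (m := m) (k := k) n
  unfold gg
  omega

include hk

lemma patch (n' d : ℕ)
    (h1 : ∀ i, k ≤ i → b d i = 0)
    (h2 : b n' k = (if k % 2 = 0 then 1 else m) → b d (k - 1) = 0) :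
    lowk m b k (d + gg m b k n') = d ∧ gg m b k (d + gg m b k n') = gg m b k n' ∧
      ∀ i, k ≤ i → b (d + gg m b k n') i = b n' i := by
  classical
  set c : ℕ →₀ ℕ := Finsupp.onFinset ((b d).support ∪ (b n').support)
    (fun i => if i < k then b d i else b n' i)
    (fun i hi => by
      by_cases h : i < k <;> simp only [h, if_true, if_false] at hi <;>
        simp [Finsupp.mem_support_iff, hi]) with hc
  have hcval : ∀ i, c i = if i < k then b d i else b n' i := fun i => rfl
  have hadm : Adm m c := by
    obtain ⟨hd0, hde, hdo, hdm⟩ := adm_b hm hb d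
    obtain ⟨hn0, hne, hno, hnm⟩ := adm_b hm hb n'
    refine ⟨?_, ?_, ?_, ?_⟩
    · rw [hcval]; simp only [if_pos (by omega : 0 < k)]; exact hd0
    · intro i hi; rw [hcval]; split
      · exact hde i hi
      · exact hne i hi
    · intro i hi; rw [hcval]; split
      · exact hdo i hi
      · exact hno i hi
    · intro i hi1 hieq
      rw [hcval] at hieq
      rcases Nat.lt_trichotomy i k with hik | hik | hik
      · rw [if_pos hik] at hieq
        rw [hcval, if_pos (by omega : i - 1 < k)]
        exact hdm i hi1 hieq
      · subst hik
        rw [if_neg (by omega)] at hieq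
        rw [hcval, if_pos (by omega : i - 1 < i)]
        exact h2 hieq
      · rw [if_neg (by omega)] at hieq
        rw [hcval, if_neg (by omega : ¬ i - 1 < k)]
        exact hnm i hi1 hieq
  obtain ⟨K, hkK, hvn⟩ := exists_bigK hm hb k n'
  obtain ⟨K', hkK', hvd⟩ := exists_bigK hm hb k d
  set L := max K K' with hL
  have hvnL : ∀ i, L ≤ i → b n' i = 0 := fun i hi => hvn i (by omega)
  have hvdL : ∀ i, L ≤ i → b d i = 0 := fun i hi => hvd i (by omega)
  have hkL : k ≤ L := le_trans hkK (le_max_left _ _)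
  have hvc : ∀ i, L ≤ i → c i = 0 := by
    intro i hi
    rw [hcval]
    split
    · exact hvdL i hi
    · exact hvnL i hi
  have hvalc : val m c = d + gg m b k n' := by
    rw [val_eq_range m c L hvc]
    have hsplit : ∑ i ∈ Finset.range L, c i * qseq m i
        = ∑ i ∈ Finset.range k, c i * qseq m i + ∑ i ∈ Finset.Ico k L, c i * qseq m i := by
      rw [Finset.range_eq_Ico, Finset.range_eq_Ico]
      exact (Finset.sum_Ico_consecutive _ (Nat.zero_le k) hkL).symm
    rw [hsplit]
    have e1 : ∑ i ∈ Finset.range k, c i * qseq m i = d := by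
      have : ∑ i ∈ Finset.range k, c i * qseq m i = ∑ i ∈ Finset.range k, b d i * qseq m i := by
        apply Finset.sum_congr rfl
        intro i hi
        rw [hcval, if_pos (Finset.mem_range.mp hi)]
      rw [this, ← val_eq_range m (b d) k h1, val_b hm hb]
    have e2 : ∑ i ∈ Finset.Ico k L, c i * qseq m i = gg m b k n' := by
      have : ∑ i ∈ Finset.Ico k L, c i * qseq m i = ∑ i ∈ Finset.Ico k L, b n' i * qseq m i := by
        apply Finset.sum_congr rfl
        intro i hi
        rw [hcval, if_neg (by have := (Finset.mem_Ico.mp hi).1; omega)]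
      rw [this]
      exact gg_ico hm hb hkL hvnL
    rw [e1, e2]
  have hbc : b (d + gg m b k n') = c := by
    apply adm_val_injective m hm (adm_b hm hb _) hadm
    rw [val_b hm hb, hvalc]
  have hlow : lowk m b k (d + gg m b k n') = d := by
    unfold lowk
    rw [hbc]
    have : ∑ i ∈ Finset.range k, c i * qseq m i = ∑ i ∈ Finset.range k, b d i * qseq m i := by
      apply Finset.sum_congr rfl
      intro i hi
      rw [hcval, if_pos (Finset.mem_range.mp hi)]
    rw [this, ← val_eq_range m (b d) k h1, val_b hm hb]
  refine ⟨hlow, ?_, ?_⟩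
  · show d + gg m b k n' - lowk m b k (d + gg m b k n') = gg m b k n'
    rw [hlow]
    omega
  · intro i hi
    rw [hbc, hcval, if_neg (by omega)]

lemma g_between {a n' : ℕ} (ha1 : gg m b k n' ≤ a) (ha2 : a ≤ n') :
    gg m b k a = gg m b k n' := by
  set d := a - gg m b k n' with hd
  have hglow := gg_add_lowk hm hb (k := k) n'
  have hdlow : d ≤ lowk m b k n' := by omega
  have key : (∀ i, k ≤ i → b d i = 0) ∧
      (b n' k = (if k % 2 = 0 then 1 else m) → b d (k - 1) = 0) := by
    by_cases hck : b n' k = (if k % 2 = 0 then 1 else m)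
    · have hk1 : b n' (k - 1) = 0 := hb.2.2.2.2 n' k (by omega) hck
      have hlow : lowk m b k n' < qseq m (k - 1) := by
        have hsq : lowk m b k n' = ∑ i ∈ Finset.range (k - 1), b n' i * qseq m i := by
          unfold lowk
          rw [show k = (k - 1) + 1 from by omega, Finset.sum_range_succ]
          simp [hk1]
        rw [hsq]
        exact sum_lt m hm (adm_b hm hb n') (k - 1)
      have hvan := digits_vanish hm hb (n := d) (K := k - 1) (by omega)
      exact ⟨fun i hi => hvan i (by omega), fun _ => hvan (k - 1) le_rfl⟩
    · have hlow : lowk m b k n' < qseq m k := by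
        have := sum_lt m hm (adm_b hm hb n') k
        exact this
      have hvan := digits_vanish hm hb (n := d) (K := k) (by omega)
      exact ⟨hvan, fun hc => absurd hc hck⟩
  obtain ⟨hgg, -⟩ := (patch hm hb hk n' d key.1 key.2).2
  have hda : d + gg m b k n' = a := by omega
  rw [← hda]
  exact hgg

lemma g_mono {a n' : ℕ} (h : a ≤ n') : gg m b k a ≤ gg m b k n' := by
  rcases le_or_gt (gg m b k n') a with h1 | h1
  · exact (g_between hm hb hk h1 h).le
  · have : gg m b k a ≤ a := Nat.sub_le _ _
    omega

lemma g_fix {t : ℕ} (ht : 1 ≤ t) (hj : gg m b k t ≠ gg m b k (t - 1)) :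
    gg m b k t = t := by
  by_contra hne
  have h1 : gg m b k t ≤ t := Nat.sub_le _ _
  have h2 : gg m b k t ≤ t - 1 := by omega
  exact hj (g_between hm hb hk h2 (by omega)).symm

lemma g_gap {t : ℕ} (ht : 1 ≤ t) (hfix : gg m b k t = t) :
    gg m b k (t - 1) + qseq m (k - 1) ≤ t := by
  by_contra hcon
  push_neg at hcon
  have h1 : gg m b k (t - 1) ≤ t - 1 := Nat.sub_le _ _
  set d := t - gg m b k (t - 1) with hd
  have hd1 : 1 ≤ d := by omega
  have hdQ : d < qseq m (k - 1) := by omega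
  have hvan := digits_vanish hm hb (n := d) (K := k - 1) hdQ
  obtain ⟨_, hgg, _⟩ := patch hm hb hk (t - 1) d (fun i hi => hvan i (by omega))
    (fun _ => hvan (k - 1) le_rfl)
  have hda : d + gg m b k (t - 1) = t := by omega
  rw [hda] at hgg
  omega

lemma high_eq {a a' : ℕ} (h : gg m b k a = gg m b k a') :
    ∀ i, k ≤ i → b a i = b a' i := by
  classical
  have pad : ∀ n : ℕ, ∃ c : ℕ →₀ ℕ, (∀ i, c i = if i < k then 0 else b n i)
      ∧ Adm m c ∧ val m c = gg m b k n := by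
    intro n
    set cpad : ℕ →₀ ℕ := Finsupp.onFinset (b n).support (fun i => if i < k then 0 else b n i)
      (fun i hi => by
        by_cases h : i < k
        · simp [h] at hi
        · simp only [h, if_false] at hi
          exact Finsupp.mem_support_iff.2 hi) with hcpad
    have hcv : ∀ i, cpad i = if i < k then 0 else b n i := fun i => rfl
    refine ⟨cpad, hcv, ?_, ?_⟩
    · obtain ⟨hn0, hne, hno, hnm⟩ := adm_b hm hb n
      refine ⟨by rw [hcv, if_pos (by omega : 0 < k)], ?_, ?_, ?_⟩
      · intro i hi; rw [hcv]; split
        · omega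
        · exact hne i hi
      · intro i hi; rw [hcv]; split
        · omega
        · exact hno i hi
      · intro i hi1 hieq
        rw [hcv] at hieq
        rw [hcv]
        have hMx : 1 ≤ (if i % 2 = 0 then 1 else m) := by split <;> omega
        by_cases hik : i < k
        · rw [if_pos hik] at hieq; omega
        · rw [if_neg hik] at hieq
          have := hnm i hi1 hieq
          split
          · rfl
          · exact this
    · obtain ⟨K, hkK, hvn⟩ := exists_bigK hm hb k n
      have hvc : ∀ i, K ≤ i → cpad i = 0 := by
        intro i hi
        rw [hcv]
        split
        · rfl
        · exact hvn i hi
      rw [val_eq_range m _ K hvc]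
      have hcongr : ∀ i ∈ Finset.range K, cpad i * qseq m i
          = (if i < k then 0 else b n i) * qseq m i := by
        intro i _
        rw [hcv]
      rw [Finset.sum_congr rfl hcongr]
      have hsplit : ∑ i ∈ Finset.range K, (if i < k then 0 else b n i) * qseq m i
          = ∑ i ∈ Finset.range k, (if i < k then 0 else b n i) * qseq m i
            + ∑ i ∈ Finset.Ico k K, (if i < k then 0 else b n i) * qseq m i := by
        rw [Finset.range_eq_Ico, Finset.range_eq_Ico]
        exact (Finset.sum_Ico_consecutive _ (Nat.zero_le k) hkK).symm
      have e1 : ∑ i ∈ Finset.range k, (if i < k then 0 else b n i) * qseq m i = 0 := by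
        apply Finset.sum_eq_zero
        intro i hi
        rw [if_pos (Finset.mem_range.mp hi), zero_mul]
      have e2 : ∑ i ∈ Finset.Ico k K, (if i < k then 0 else b n i) * qseq m i
          = gg m b k n := by
        rw [← gg_ico hm hb hkK hvn]
        apply Finset.sum_congr rfl
        intro i hi
        rw [if_neg (by have := (Finset.mem_Ico.mp hi).1; omega)]
      rw [hsplit, e1, e2, zero_add]
  obtain ⟨c1, hc1v, hc1a, hc1val⟩ := pad a
  obtain ⟨c2, hc2v, hc2a, hc2val⟩ := pad a'
  have : c1 = c2 := adm_val_injective m hm hc1a hc2a (by rw [hc1val, hc2val, h])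
  intro i hi
  have := congrArg (fun f : ℕ →₀ ℕ => f i) this
  rw [hc1v, hc2v, if_neg (by omega), if_neg (by omega)] at this
  exact this

end WithB


lemma e_add (x y : ℝ) : e (x + y) = e x * e y := by
  unfold e
  rw [← Complex.exp_add]
  congr 1
  push_cast
  ring

lemma conj_e (x : ℝ) : (starRingEnd ℂ) (e x) = e (-x) := by
  unfold e
  rw [← Complex.exp_conj]
  congr 1
  simp only [map_mul, Complex.conj_I, Complex.conj_ofReal, map_ofNat]
  push_cast
  ring

lemma e_mul_conj (a c : ℝ) : e a * (starRingEnd ℂ) (e c) = e (a - c) := by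
  rw [conj_e, ← e_add, sub_eq_add_neg]

section WithB2

variable {m : ℕ} (hm : 2 ≤ m) {b : ℕ → ℕ →₀ ℕ} (hb : IsOstrowskiDigits m b) {k : ℕ} (hk : 2 ≤ k)

include hm hb hk

lemma Sα_split {n K : ℕ} (hkK : k ≤ K) (hv : ∀ i, K ≤ i → b n i = 0) :
    Sα b n = Sαk b k n + ∑ i ∈ Finset.Ico k K, b n i := by
  unfold Sα Sαk
  rw [sum_digits_eq_range (b n) K hv, Finset.range_eq_Ico, Finset.range_eq_Ico]
  exact (Finset.sum_Ico_consecutive (fun i => b n i) (Nat.zero_le k) hkK).symm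

lemma e_eq_of_gg_eq (γ : ℝ) {x y : ℕ} (h : gg m b k x = gg m b k y) :
    e (γ * Sα b x) * (starRingEnd ℂ) (e (γ * Sα b y)) =
      e (γ * Sαk b k x) * (starRingEnd ℂ) (e (γ * Sαk b k y)) := by
  have hd := high_eq hm hb hk h
  obtain ⟨K1, hk1, hv1⟩ := exists_bigK hm hb k x
  obtain ⟨K2, hk2, hv2⟩ := exists_bigK hm hb k y
  set K := max K1 K2 with hK
  have hvx : ∀ i, K ≤ i → b x i = 0 := fun i hi => hv1 i (by omega)
  have hvy : ∀ i, K ≤ i → b y i = 0 := fun i hi => hv2 i (by omega)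
  have hx : Sα b x = Sαk b k x + ∑ i ∈ Finset.Ico k K, b x i :=
    Sα_split hm hb hk (by omega) hvx
  have hy : Sα b y = Sαk b k y + ∑ i ∈ Finset.Ico k K, b y i :=
    Sα_split hm hb hk (by omega) hvy
  have hhi : ∑ i ∈ Finset.Ico k K, b x i = ∑ i ∈ Finset.Ico k K, b y i := by
    apply Finset.sum_congr rfl
    intro i hi
    exact hd i (Finset.mem_Ico.mp hi).1
  rw [e_mul_conj, e_mul_conj]
  congr 1
  rw [hx, hy, hhi]
  push_cast
  ring

end WithB2

lemma div_mod_unique' {Q a1 a2 u1 u2 : ℕ} (h1 : u1 < Q) (h2 : u2 < Q)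
    (h : a1 * Q + u1 = a2 * Q + u2) : a1 = a2 ∧ u1 = u2 := by
  rcases Nat.lt_trichotomy a1 a2 with hlt | heq | hlt
  · exfalso
    have : (a1 + 1) * Q ≤ a2 * Q := Nat.mul_le_mul_right Q (by omega)
    rw [add_mul, one_mul] at this
    omega
  · constructor
    · exact heq
    · rw [heq] at h; omega
  · exfalso
    have : (a2 + 1) * Q ≤ a1 * Q := Nat.mul_le_mul_right Q (by omega)
    rw [add_mul, one_mul] at this
    omega

lemma count_bound (g : ℕ → ℕ) (Q N r : ℕ) (hr : 1 ≤ r) (hrQ : r ≤ Q)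
    (hmono : ∀ a a', a ≤ a' → g a ≤ g a')
    (hfix : ∀ t, 1 ≤ t → g t ≠ g (t - 1) → g t = t)
    (hgap : ∀ t, 1 ≤ t → g t = t → g (t - 1) + Q ≤ t) :
    ((Finset.range N).filter fun n => g (n + r) ≠ g n).card * Q ≤ N * r := by
  classical
  set B := (Finset.range N).filter (fun n => g (n + r) ≠ g n) with hB
  let T : ℕ → ℕ := fun n => if h : ∃ t, n < t ∧ g t ≠ g n then Nat.find h else 0
  have hT : ∀ n ∈ B, n < T n ∧ T n ≤ n + r ∧ g (T n) = T n ∧ g (T n - 1) + Q ≤ T n := by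
    intro n hn
    have hmem := Finset.mem_filter.mp hn
    have h : ∃ t, n < t ∧ g t ≠ g n := ⟨n + r, by omega, hmem.2⟩
    have hTn : T n = Nat.find h := by simp only [T, dif_pos h]
    have ht1 := Nat.find_spec h
    have hle : Nat.find h ≤ n + r := Nat.find_le ⟨by omega, hmem.2⟩
    have hprev : g (Nat.find h - 1) = g n := by
      rcases Nat.lt_or_ge n (Nat.find h - 1) with hc | hc
      · have := Nat.find_min h (show Nat.find h - 1 < Nat.find h by omega)
        push_neg at this
        exact this hc
      · have : Nat.find h - 1 = n := by omega
        rw [this]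
    have hjump : g (Nat.find h) ≠ g (Nat.find h - 1) := by
      rw [hprev]; exact ht1.2
    have hfx := hfix _ (by omega) hjump
    have hgp := hgap _ (by omega) hfx
    rw [hTn]
    exact ⟨ht1.1, hle, hfx, hgp⟩
  have hsep : ∀ t t', g t = t → g t' = t' → t < t' → t + Q ≤ t' := by
    intro t t' h1 h2 hlt
    have h3 : g (t' - 1) + Q ≤ t' := hgap t' (by omega) h2
    have h4 : g t ≤ g (t' - 1) := hmono _ _ (by omega)
    omega
  have hQ1 : 1 ≤ Q := le_trans hr hrQ
  -- key arithmetic facts for each bad pair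
  have facts : ∀ n ∈ B, ∀ u < Q,
      let t := T n; let y := min t N; let z := t - y; let d := t - 1 - n;
      let w' := (d - z) * Q + u
      w' / r < Q - z ∧ w' / r ≤ y - 1 ∧ 1 ≤ y ∧ y ≤ N ∧ y ≤ t ∧ Q ≤ t ∧
        z ≤ d ∧ d < r ∧ n < N ∧ n + 1 ≤ y := by
    intro n hn u hu
    intro t y z d w'
    have hmem := Finset.mem_filter.mp hn
    have hnN : n < N := Finset.mem_range.mp hmem.1
    obtain ⟨h1, h2, h3, h4⟩ := hT n hn
    have hyt : y ≤ t := min_le_left _ _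
    have hyN : y ≤ N := min_le_right _ _
    have hny : n + 1 ≤ y := le_min h1 hnN
    have hQt : Q ≤ t := by omega
    have hzd : z ≤ d := by simp only [z, d, y]; omega
    have hdr : d < r := by simp only [d]; omega
    have hzr : z ≤ r - 1 := by omega
    -- w' < (Q - z) * r
    have hstep1 : (d - z) * Q ≤ (r - 1 - z) * Q := Nat.mul_le_mul_right Q (by omega)
    have hstep2 : (r - 1 - z) * Q + Q = (r - z) * Q := by
      rw [← Nat.succ_mul]
      congr 1
      omega
    have hstep3 : (r - z) * Q ≤ (Q - z) * r := by
      have e1 : (r - z) * Q + z * Q = r * Q := by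
        rw [← Nat.add_mul]; congr 1; omega
      have e2 : (Q - z) * r + z * r = Q * r := by
        rw [← Nat.add_mul]; congr 1; omega
      have e3 : z * r ≤ z * Q := Nat.mul_le_mul_left z hrQ
      have e4 : r * Q = Q * r := Nat.mul_comm r Q
      omega
    have hw'lt : w' < (Q - z) * r := by
      have : w' ≤ (r - 1 - z) * Q + u := by simp only [w']; omega
      omega
    have hdiv : w' / r < Q - z := (Nat.div_lt_iff_lt_mul (by omega : 0 < r)).2 hw'lt
    have hQzy : Q - z ≤ y := by simp only [z, y] at *; omega
    refine ⟨hdiv, by omega, by omega, hyN, hyt, hQt, hzd, hdr, hnN, hny⟩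
  have hcard : (B ×ˢ Finset.range Q).card ≤ ((Finset.range N) ×ˢ (Finset.range r)).card := by
    apply Finset.card_le_card_of_injOn (fun p =>
      (min (T p.1) N - 1 - ((T p.1 - 1 - p.1 - (T p.1 - min (T p.1) N)) * Q + p.2) / r,
        ((T p.1 - 1 - p.1 - (T p.1 - min (T p.1) N)) * Q + p.2) % r))
    · intro p hp
      obtain ⟨hp1, hp2⟩ := Finset.mem_product.mp hp
      have hu := Finset.mem_range.mp hp2
      obtain ⟨hdiv, hdivy, hy1, hyN, hyt, hQt, hzd, hdr, hnN, hny⟩ := facts p.1 hp1 p.2 hu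
      simp only [Finset.mem_coe]
      rw [Finset.mem_product, Finset.mem_range, Finset.mem_range]
      set t1 := T p.1 with ht1
      set y1 := min t1 N with hy1'
      set w1 := (t1 - 1 - p.1 - (t1 - y1)) * Q + p.2 with hw1
      set D1 := w1 / r with hD1
      clear_value t1 y1 w1 D1
      constructor
      · omega
      · exact Nat.mod_lt _ (by omega)
    · intro p1 hp1 p2 hp2 heq
      simp only [Finset.mem_coe] at hp1 hp2
      obtain ⟨hp11, hp12⟩ := Finset.mem_product.mp hp1
      obtain ⟨hp21, hp22⟩ := Finset.mem_product.mp hp2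
      have hu1 := Finset.mem_range.mp hp12
      have hu2 := Finset.mem_range.mp hp22
      obtain ⟨hdiv1, hdivy1, hy11, hyN1, hyt1, hQt1, hzd1, hdr1, hnN1, hny1⟩ :=
        facts p1.1 hp11 p1.2 hu1
      obtain ⟨hdiv2, hdivy2, hy12, hyN2, hyt2, hQt2, hzd2, hdr2, hnN2, hny2⟩ :=
        facts p2.1 hp21 p2.2 hu2
      obtain ⟨hb11, hb12, hb13, hb14⟩ := hT p1.1 hp11
      obtain ⟨hb21, hb22, hb23, hb24⟩ := hT p2.1 hp21
      have hx := congrArg Prod.fst heq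
      have hv := congrArg Prod.snd heq
      simp only at hx hv
      set t1 := T p1.1 with ht1
      set t2 := T p2.1 with ht2
      set y1 := min t1 N with hy1'
      set y2 := min t2 N with hy2'
      set w1 := (t1 - 1 - p1.1 - (t1 - y1)) * Q + p1.2 with hw1
      set w2 := (t2 - 1 - p2.1 - (t2 - y2)) * Q + p2.2 with hw2
      set D1 := w1 / r with hD1
      set D2 := w2 / r with hD2
      have hy12 : t1 = t2 → y1 = y2 := fun h => by rw [hy1', hy2', h]
      have hww12 : w1 = w2 → (t1 - 1 - p1.1 - (t1 - y1)) * Q + p1.2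
          = (t2 - 1 - p2.1 - (t2 - y2)) * Q + p2.2 := fun h => by
        rw [← hw1, ← hw2]; exact h
      clear_value t1 t2 y1 y2 w1 w2 D1 D2
      -- t1 = t2
      have htt : t1 = t2 := by
        rcases Nat.lt_trichotomy t1 t2 with hlt | heqt | hlt
        · have := hsep t1 t2 hb13 hb23 hlt
          omega
        · exact heqt
        · have := hsep t2 t1 hb23 hb13 hlt
          omega
      have hyy : y1 = y2 := hy12 htt
      have hdd : D1 = D2 := by omega
      have hvv : w1 % r = w2 % r := hv
      have hww : w1 = w2 := by
        have hm1 := Nat.div_add_mod w1 r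
        have hm2 := Nat.div_add_mod w2 r
        rw [← hD1, hdd, hvv] at hm1
        rw [← hD2] at hm2
        exact hm1.symm.trans hm2
      have hun := div_mod_unique' hu1 hu2 (hww12 hww)
      have hnn : p1.1 = p2.1 := by
        have h1 := hun.1
        omega
      exact Prod.ext hnn hun.2
  simpa using hcard

end TruncAux

/-- Truncation lemma for the Ostrowski sum of digits. -/
theorem truncation_ostrowski (m : ℕ) (hm : 2 ≤ m)
    (b : ℕ → ℕ →₀ ℕ) (hb : IsOstrowskiDigits m b)
    (N r : ℕ) (k : ℕ) (hk : 2 ≤ k) (γ : ℝ) :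
    (((Finset.range N).filter fun n =>
        e (γ * Sα b (n + r)) * (starRingEnd ℂ) (e (γ * Sα b n)) ≠
          e (γ * Sαk b k (n + r)) * (starRingEnd ℂ) (e (γ * Sαk b k n))).card : ℝ) ≤
      (N : ℝ) * r / qseq m (k - 1) := by
  classical
  have hQpos := TruncAux.qseq_pos m hm (k - 1)
  set B := (Finset.range N).filter
    (fun n => TruncAux.gg m b k (n + r) ≠ TruncAux.gg m b k n) with hBdef
  have hsub : ((Finset.range N).filter fun n =>
      e (γ * Sα b (n + r)) * (starRingEnd ℂ) (e (γ * Sα b n)) ≠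
        e (γ * Sαk b k (n + r)) * (starRingEnd ℂ) (e (γ * Sαk b k n))) ⊆ B := by
    intro n hn
    rw [Finset.mem_filter] at hn
    rw [hBdef, Finset.mem_filter]
    refine ⟨hn.1, fun hggeq => hn.2 (TruncAux.e_eq_of_gg_eq hm hb hk γ hggeq)⟩
  have h1 := Finset.card_le_card hsub
  have h2 : B.card * qseq m (k - 1) ≤ N * r := by
    rcases Nat.eq_zero_or_pos r with hr0 | hr1
    · have hBe : B = ∅ := by
        rw [hBdef]
        apply Finset.filter_false_of_mem
        intro x _
        rw [hr0, Nat.add_zero]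
        simp
      rw [hBe]
      simp
    · rcases le_or_gt r (qseq m (k - 1)) with hrQ | hrQ
      · exact TruncAux.count_bound (TruncAux.gg m b k) (qseq m (k - 1)) N r hr1 hrQ
          (fun a a' h => TruncAux.g_mono hm hb hk h)
          (fun t ht hj => TruncAux.g_fix hm hb hk ht hj)
          (fun t ht hf => TruncAux.g_gap hm hb hk ht hf)
      · have hBN : B.card ≤ N := by
          rw [hBdef]
          exact le_of_le_of_eq (Finset.card_filter_le _ _) (Finset.card_range N)
        calc B.card * qseq m (k - 1) ≤ N * qseq m (k - 1) :=
              Nat.mul_le_mul_right _ hBN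
          _ ≤ N * r := Nat.mul_le_mul_left N (le_of_lt hrQ)
  have hQR : (0 : ℝ) < (qseq m (k - 1) : ℝ) := by exact_mod_cast hQpos
  rw [le_div_iff₀ hQR]
  calc ((((Finset.range N).filter fun n =>
        e (γ * Sα b (n + r)) * (starRingEnd ℂ) (e (γ * Sα b n)) ≠
          e (γ * Sαk b k (n + r)) * (starRingEnd ℂ) (e (γ * Sαk b k n))).card : ℝ))
          * (qseq m (k - 1) : ℝ)
      ≤ (B.card : ℝ) * (qseq m (k - 1) : ℝ) := by
        apply mul_le_mul_of_nonneg_right _ (le_of_lt hQR)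
        exact_mod_cast h1
    _ ≤ (N : ℝ) * r := by exact_mod_cast h2

end
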